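/- Let J ⊆ T = A[[x₁,…,xₙ]][[t]] be an ideal generated by t-homogeneous elements (A a complete regular local ring). For F ∈ T with t-homogeneous decomposition F = ∑_{d∈ℤ} F_d, one has F ∈ J if and only if F_d ∈ J for all d ∈ ℤ. -/

import Mathlib

noncomputable section

/-- `A` is a complete regular local ring. -/
def IsCompleteRegularLocal (A : Type*) [CommRing A] [IsLocalRing A] : Prop :=
  IsNoetherianRing A ∧ IsAdicComplete (IsLocalRing.maximalIdeal A) A ∧
    ∃ s : Finset A, Ideal.span (s : Set A) = IsLocalRing.maximalIdeal A ∧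
      ((s.card : ℕ∞) : WithBot ℕ∞) = ringKrullDim A

variable {A : Type*} [CommRing A] {n : ℕ}

/-- `F ∈ T = A[[x₁,…,xₙ]][[t]]` is `t`-homogeneous of degree `d ∈ ℤ`. -/
def tHomogeneous (d : ℤ) (F : PowerSeries (MvPowerSeries (Fin n) A)) : Prop :=
  ∀ (i : ℕ) (e : Fin n →₀ ℕ), ((e.sum fun _ v => v : ℕ) : ℤ) ≠ (i : ℤ) + d →
    MvPowerSeries.coeff (R := A) e (PowerSeries.coeff (R := MvPowerSeries (Fin n) A) i F) = 0

namespace Stmt4Aux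
open PowerSeries

variable {R : Type*} [CommRing R]

/-- The ideal of `k`-th coefficients of elements of `J` of order `≥ k`. -/
def lowIdeal (J : Ideal R⟦X⟧) (k : ℕ) : Ideal R where
  carrier := {a | ∃ f, f ∈ J ∧ (∀ j < k, coeff (R := R) j f = 0) ∧ coeff (R := R) k f = a}
  add_mem' := by
    rintro a b ⟨f, hf, hlf, hcf⟩ ⟨g, hg, hlg, hcg⟩
    exact ⟨f + g, J.add_mem hf hg, fun j hj => by simp [hlf j hj, hlg j hj],
      by simp [hcf, hcg]⟩
  zero_mem' := ⟨0, J.zero_mem, by simp, by simp⟩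
  smul_mem' := by
    rintro r a ⟨f, hf, hlf, hcf⟩
    refine ⟨C (R := R) r * f, J.mul_mem_left _ hf, fun j hj => ?_, ?_⟩
    · rw [coeff_C_mul, hlf j hj, mul_zero]
    · rw [smul_eq_mul, coeff_C_mul, hcf]

lemma mem_lowIdeal {J : Ideal R⟦X⟧} {k : ℕ} {a : R} :
    a ∈ lowIdeal J k ↔ ∃ f, f ∈ J ∧ (∀ j < k, coeff (R := R) j f = 0) ∧ coeff (R := R) k f = a :=
  Iff.rfl

lemma lowIdeal_mono (J : Ideal R⟦X⟧) : Monotone (lowIdeal J) := by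
  apply monotone_nat_of_le_succ
  intro k a ha
  obtain ⟨f, hf, hlf, hcf⟩ := ha
  refine ⟨X * f, J.mul_mem_left _ hf, ?_, by rw [coeff_succ_X_mul, hcf]⟩
  intro j hj
  cases j with
  | zero => simp
  | succ j => rw [coeff_succ_X_mul]; exact hlf j (by omega)

section Tail

variable (J : Ideal R⟦X⟧) (N : ℕ) (s : Finset R) (w : R → R⟦X⟧)
variable (hw : ∀ a ∈ s, w a ∈ J ∧ (∀ j < N, coeff (R := R) j (w a) = 0) ∧ coeff (R := R) N (w a) = a)
variable (hstab : ∀ (m : ℕ) (g : R⟦X⟧), g ∈ J → (∀ j < N + m, coeff (R := R) j g = 0) →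
    ∃ r : R → R, (∑ a ∈ s, r a * a) = coeff (R := R) (N + m) g)

/-- One step of the successive-approximation construction. -/
def hilbStep (m : ℕ) (g : {g : R⟦X⟧ // g ∈ J ∧ ∀ j < N + m, coeff (R := R) j g = 0}) :
    {g : R⟦X⟧ // g ∈ J ∧ ∀ j < N + (m + 1), coeff (R := R) j g = 0} := by
  refine ⟨g.1 - ∑ a ∈ s, C (R := R) ((hstab m g.1 g.2.1 g.2.2).choose a) * X ^ m * w a,
    J.sub_mem g.2.1 (Ideal.sum_mem _ fun a ha => J.mul_mem_left _ (hw a ha).1), ?_⟩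
  intro j hj
  have hterm : ∀ a ∈ s, coeff (R := R) j (C (R := R) ((hstab m g.1 g.2.1 g.2.2).choose a) * X ^ m * w a)
      = (hstab m g.1 g.2.1 g.2.2).choose a * (if m ≤ j then coeff (R := R) (j - m) (w a) else 0) := by
    intro a _
    rw [mul_assoc, coeff_C_mul, coeff_X_pow_mul']
  rw [map_sub, map_sum, Finset.sum_congr rfl hterm]
  rcases lt_or_ge j (N + m) with hj' | hj'
  · rw [g.2.2 j hj']
    have : ∀ a ∈ s, (hstab m g.1 g.2.1 g.2.2).choose a *
        (if m ≤ j then coeff (R := R) (j - m) (w a) else 0) = 0 := by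
      intro a ha
      split_ifs with hm
      · rw [(hw a ha).2.1 (j - m) (by omega), mul_zero]
      · rw [mul_zero]
    rw [Finset.sum_congr rfl this, Finset.sum_const_zero, sub_zero]
  · have hjeq : j = N + m := by omega
    subst hjeq
    have : ∀ a ∈ s, (hstab m g.1 g.2.1 g.2.2).choose a *
        (if m ≤ N + m then coeff (R := R) (N + m - m) (w a) else 0)
        = (hstab m g.1 g.2.1 g.2.2).choose a * a := by
      intro a ha
      rw [if_pos (by omega), Nat.add_sub_cancel, (hw a ha).2.2]
    rw [Finset.sum_congr rfl this, (hstab m g.1 g.2.1 g.2.2).choose_spec, sub_self]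

variable (f : R⟦X⟧) (hf : f ∈ J) (hlowf : ∀ j < N, coeff (R := R) j f = 0)

/-- The sequence of remainders. -/
def hilbRem : ∀ m : ℕ, {g : R⟦X⟧ // g ∈ J ∧ ∀ j < N + m, coeff (R := R) j g = 0} := fun m =>
  Nat.rec ⟨f, hf, fun j hj => hlowf j (by simpa using hj)⟩ (hilbStep J N s w hw hstab) m

/-- The chosen coefficients at each step. -/
def hilbU (m : ℕ) : R → R :=
  (hstab m (hilbRem J N s w hw hstab f hf hlowf m).1
    (hilbRem J N s w hw hstab f hf hlowf m).2.1
    (hilbRem J N s w hw hstab f hf hlowf m).2.2).choose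

lemma hilbRem_succ (m : ℕ) :
    (hilbRem J N s w hw hstab f hf hlowf (m + 1)).1
      = (hilbRem J N s w hw hstab f hf hlowf m).1
        - ∑ a ∈ s, C (R := R) (hilbU J N s w hw hstab f hf hlowf m a) * X ^ m * w a := rfl

lemma hilbRem_closed (m : ℕ) :
    (hilbRem J N s w hw hstab f hf hlowf m).1
      = f - ∑ a ∈ s,
          (∑ m' ∈ Finset.range m, C (R := R) (hilbU J N s w hw hstab f hf hlowf m' a) * X ^ m') * w a := by
  induction m with
  | zero => simp [hilbRem]
  | succ m ih =>
    rw [hilbRem_succ, ih, sub_sub]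
    congr 1
    rw [← Finset.sum_add_distrib]
    refine Finset.sum_congr rfl fun a _ => ?_
    rw [Finset.sum_range_succ, add_mul]

lemma hilbFinal :
    f = ∑ a ∈ s, (mk fun m => hilbU J N s w hw hstab f hf hlowf m a) * w a := by
  ext j
  have h1 := congrArg (coeff (R := R) j) (hilbRem_closed J N s w hw hstab f hf hlowf (j + 1))
  rw [(hilbRem J N s w hw hstab f hf hlowf (j + 1)).2.2 j (by omega), map_sub] at h1
  have h2 : ∀ a ∈ s,
      coeff (R := R) j ((∑ m' ∈ Finset.range (j + 1),
          C (R := R) (hilbU J N s w hw hstab f hf hlowf m' a) * X ^ m') * w a)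
        = coeff (R := R) j ((mk fun m => hilbU J N s w hw hstab f hf hlowf m a) * w a) := by
    intro a _
    rw [coeff_mul, coeff_mul]
    refine Finset.sum_congr rfl fun p hp => ?_
    have hp1 : p.1 ≤ j := by
      have := Finset.HasAntidiagonal.mem_antidiagonal.mp hp; omega
    congr 1
    rw [coeff_mk, map_sum]
    have : ∀ m' ∈ Finset.range (j + 1),
        coeff (R := R) p.1 (C (R := R) (hilbU J N s w hw hstab f hf hlowf m' a) * X ^ m')
          = if p.1 = m' then hilbU J N s w hw hstab f hf hlowf m' a else 0 := by
      intro m' _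
      rw [coeff_C_mul, coeff_X_pow]
      split_ifs <;> simp
    rw [Finset.sum_congr rfl this, Finset.sum_ite_eq (Finset.range (j + 1))]
    rw [if_pos (Finset.mem_range.mpr (by omega))]
  rw [map_sum, ← Finset.sum_congr rfl h2]
  have := sub_eq_zero.mp h1.symm
  rw [map_sum] at this
  exact this

include hw hstab hf hlowf in
lemma hilbTail [DecidableEq R⟦X⟧] : f ∈ Ideal.span ((s.image w : Finset R⟦X⟧) : Set R⟦X⟧) := by
  rw [hilbFinal J N s w hw hstab f hf hlowf]
  refine Ideal.sum_mem _ fun a ha => Ideal.mul_mem_left _ _ (Ideal.subset_span ?_)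
  exact Finset.mem_coe.mpr (Finset.mem_image_of_mem _ ha)

end Tail

theorem powerSeries_isNoetherianRing [IsNoetherianRing R] : IsNoetherianRing R⟦X⟧ := by
  rw [isNoetherianRing_iff_ideal_fg]
  intro J
  classical
  haveI := Classical.decEq R⟦X⟧
  obtain ⟨N, hN⟩ := monotone_stabilizes_iff_noetherian.mpr
    (inferInstance : IsNoetherian R R) ⟨lowIdeal J, lowIdeal_mono J⟩
  have hfg : ∀ k, ∃ S : Finset R, Ideal.span (S : Set R) = lowIdeal J k := fun k =>
    IsNoetherian.noetherian (lowIdeal J k)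
  choose S hS using hfg
  have hSsub : ∀ k, ∀ a ∈ S k, ∃ g, g ∈ J ∧ (∀ j < k, coeff (R := R) j g = 0) ∧ coeff (R := R) k g = a := by
    intro k a ha
    exact mem_lowIdeal.mp ((hS k) ▸ Ideal.subset_span (Finset.mem_coe.mpr ha))
  have hchoice : ∀ k, ∀ a : R, ∃ g, a ∈ S k →
      g ∈ J ∧ (∀ j < k, coeff (R := R) j g = 0) ∧ coeff (R := R) k g = a := by
    intro k a
    by_cases h : a ∈ S k
    · obtain ⟨g, hg⟩ := hSsub k a h
      exact ⟨g, fun _ => hg⟩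
    · exact ⟨0, fun h' => absurd h' h⟩
  choose w hwP using hchoice
  set G : Finset R⟦X⟧ := (Finset.range (N + 1)).biUnion (fun k => (S k).image (w k)) with hGdef
  refine ⟨G, le_antisymm (Ideal.span_le.mpr ?_) ?_⟩
  · intro g hg
    rw [Finset.mem_coe, hGdef] at hg
    obtain ⟨k, -, hg2⟩ := Finset.mem_biUnion.mp hg
    obtain ⟨a, ha, rfl⟩ := Finset.mem_image.mp hg2
    exact (hwP k a ha).1
  -- the stabilization hypothesis for the tail lemma
  have hstab : ∀ (m : ℕ) (g : R⟦X⟧), g ∈ J → (∀ j < N + m, coeff (R := R) j g = 0) →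
      ∃ r : R → R, (∑ a ∈ S N, r a * a) = coeff (R := R) (N + m) g := by
    intro m g hg hlow
    have h1 : coeff (R := R) (N + m) g ∈ lowIdeal J (N + m) := ⟨g, hg, hlow, rfl⟩
    have h2 := hN (N + m) (by omega)
    simp only [OrderHom.coe_mk] at h2
    rw [← h2, ← hS N] at h1
    obtain ⟨r, -, hr⟩ := Submodule.mem_span_finset.mp h1
    exact ⟨r, by simpa [smul_eq_mul] using hr⟩
  have hwN : ∀ a ∈ S N, w N a ∈ J ∧ (∀ j < N, coeff (R := R) j (w N a) = 0)
      ∧ coeff (R := R) N (w N a) = a := fun a ha => hwP N a ha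
  -- descent
  have hA : ∀ m : ℕ, ∀ f, f ∈ J → (∀ j < N - m, coeff (R := R) j f = 0) →
      f ∈ Ideal.span (G : Set R⟦X⟧) := by
    intro m
    induction m with
    | zero =>
      intro f hf hlow
      refine Ideal.span_mono ?_ (hilbTail J N (S N) (w N) hwN hstab f hf
        (by simpa using hlow))
      intro g hg
      simp only [Finset.mem_coe, Finset.mem_image] at hg
      obtain ⟨a, ha, rfl⟩ := hg
      simp only [hGdef, Finset.coe_biUnion, Set.mem_iUnion, Finset.mem_coe, Finset.mem_biUnion,
        Finset.mem_image]
      exact ⟨N, Finset.mem_range.mpr (by omega), a, ha, rfl⟩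
    | succ m ih =>
      intro f hf hlow
      by_cases hm : N ≤ m
      · exact ih f hf (fun j hj => hlow j (by omega))
      set k := N - (m + 1) with hk
      have h1 : coeff (R := R) k f ∈ lowIdeal J k := ⟨f, hf, hlow, rfl⟩
      rw [← hS k] at h1
      obtain ⟨r, -, hr⟩ := Submodule.mem_span_finset.mp h1
      set h : R⟦X⟧ := ∑ a ∈ S k, C (R := R) (r a) * w k a with hh
      have hhG : h ∈ Ideal.span (G : Set R⟦X⟧) := by
        refine Ideal.sum_mem _ fun a ha => Ideal.mul_mem_left _ _ (Ideal.subset_span ?_)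
        simp only [hGdef, Finset.coe_biUnion, Set.mem_iUnion, Finset.mem_coe, Finset.mem_biUnion,
          Finset.mem_image]
        exact ⟨k, Finset.mem_range.mpr (by omega), a, ha, rfl⟩
      have hhJ : h ∈ J := Ideal.sum_mem _ fun a ha => J.mul_mem_left _ (hwP k a ha).1
      have hsub : f - h ∈ J := J.sub_mem hf hhJ
      have hlow2 : ∀ j < N - m, coeff (R := R) j (f - h) = 0 := by
        intro j hj
        have hjk : j ≤ k := by omega
        rw [map_sub, hh, map_sum]
        have hterm : ∀ a ∈ S k, coeff (R := R) j (C (R := R) (r a) * w k a) = r a * coeff (R := R) j (w k a) := by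
          intro a _; rw [coeff_C_mul]
        rw [Finset.sum_congr rfl hterm]
        rcases lt_or_eq_of_le hjk with hjk' | hjk'
        · rw [hlow j hjk']
          have : ∀ a ∈ S k, r a * coeff (R := R) j (w k a) = 0 := by
            intro a ha
            rw [(hwP k a ha).2.1 j hjk', mul_zero]
          rw [Finset.sum_congr rfl this, Finset.sum_const_zero, sub_zero]
        · subst hjk'
          have : ∀ a ∈ S k, r a * coeff (R := R) k (w k a) = r a * a := by
            intro a ha
            rw [(hwP k a ha).2.2]
          rw [Finset.sum_congr rfl this]
          have hr' : (∑ a ∈ S k, r a * a) = coeff (R := R) k f := by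
            simpa [smul_eq_mul] using hr
          rw [hr', sub_self]
      have := ih (f - h) hsub hlow2
      have : f - h + h ∈ Ideal.span (G : Set R⟦X⟧) := Ideal.add_mem _ this hhG
      simpa using this
  intro f hf
  exact hA N f hf (fun j hj => by omega)




lemma finsupp_cons_add {k : ℕ} (a b : ℕ) (s t : Fin k →₀ ℕ) :
    Finsupp.cons a s + Finsupp.cons b t = Finsupp.cons (a + b) (s + t) := by
  ext i
  refine Fin.cases ?_ (fun i => ?_) i <;>
    simp [Finsupp.cons_zero, Finsupp.cons_succ]

lemma finsupp_tail_add {k : ℕ} (s t : Fin (k + 1) →₀ ℕ) :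
    Finsupp.tail (s + t) = Finsupp.tail s + Finsupp.tail t := by
  ext i; simp [Finsupp.tail_apply]

/-- The natural ring homomorphism `(A[[x₁,…,x_k]])[[t]] → A[[x₁,…,x_{k+1}]]`. -/
def psi (k : ℕ) : PowerSeries (MvPowerSeries (Fin k) A) →+* MvPowerSeries (Fin (k + 1)) A where
  toFun F := fun e => MvPowerSeries.coeff (R := A) (Finsupp.tail e)
    (PowerSeries.coeff (R := MvPowerSeries (Fin k) A) (e 0) F)
  map_zero' := rfl
  map_add' F G := rfl
  map_one' := by
    classical
    funext e
    show MvPowerSeries.coeff (R := A) (Finsupp.tail e) (PowerSeries.coeff (e 0) 1)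
      = MvPowerSeries.coeff (R := A) e 1
    rw [PowerSeries.coeff_one, MvPowerSeries.coeff_one]
    by_cases h0 : e 0 = 0
    · rw [if_pos h0, MvPowerSeries.coeff_one]
      by_cases ht : Finsupp.tail e = 0
      · rw [if_pos ht, if_pos]
        rw [← Finsupp.cons_tail e, h0, ht, Finsupp.cons_zero_zero]
      · rw [if_neg ht, if_neg]
        intro he
        exact ht (by rw [he]; ext i; simp [Finsupp.tail_apply])
    · rw [if_neg h0, if_neg, map_zero]
      intro he
      exact h0 (by rw [he]; simp)
  map_mul' F G := by
    classical
    funext e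
    show MvPowerSeries.coeff (R := A) (Finsupp.tail e) (PowerSeries.coeff (e 0) (F * G))
      = MvPowerSeries.coeff (R := A) e (_ * _)
    rw [PowerSeries.coeff_mul, map_sum]
    erw [MvPowerSeries.coeff_mul]
    have h1 : ∀ p ∈ Finset.HasAntidiagonal.antidiagonal (e 0),
        MvPowerSeries.coeff (R := A) (Finsupp.tail e)
          (PowerSeries.coeff (R := MvPowerSeries (Fin k) A) p.1 F *
           PowerSeries.coeff (R := MvPowerSeries (Fin k) A) p.2 G)
        = ∑ q ∈ Finset.HasAntidiagonal.antidiagonal (Finsupp.tail e),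
            MvPowerSeries.coeff (R := A) q.1 (PowerSeries.coeff (R := MvPowerSeries (Fin k) A) p.1 F) *
            MvPowerSeries.coeff (R := A) q.2 (PowerSeries.coeff (R := MvPowerSeries (Fin k) A) p.2 G) :=
      fun p _ => MvPowerSeries.coeff_mul _ _ _
  -- turn into a sum over the product and reindex
    rw [Finset.sum_congr rfl h1]
    rw [← Finset.sum_product' (Finset.HasAntidiagonal.antidiagonal (e 0)) (Finset.HasAntidiagonal.antidiagonal (Finsupp.tail e))
      (fun p q =>
        MvPowerSeries.coeff (R := A) q.1 (PowerSeries.coeff (R := MvPowerSeries (Fin k) A) p.1 F) *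
        MvPowerSeries.coeff (R := A) q.2 (PowerSeries.coeff (R := MvPowerSeries (Fin k) A) p.2 G))]
    refine Finset.sum_nbij'
      (fun pq => (Finsupp.cons pq.1.1 pq.2.1, Finsupp.cons pq.1.2 pq.2.2))
      (fun p => ((p.1 0, p.2 0), (Finsupp.tail p.1, Finsupp.tail p.2))) ?_ ?_ ?_ ?_ ?_
    · rintro ⟨⟨i₁, i₂⟩, ⟨e₁, e₂⟩⟩ hmem
      simp only [Finset.mem_product, Finset.HasAntidiagonal.mem_antidiagonal] at hmem
      rw [Finset.HasAntidiagonal.mem_antidiagonal]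
      dsimp only
      rw [finsupp_cons_add, hmem.1, hmem.2, Finsupp.cons_tail]
    · rintro ⟨p₁, p₂⟩ hmem
      rw [Finset.HasAntidiagonal.mem_antidiagonal] at hmem
      simp only [Finset.mem_product, Finset.HasAntidiagonal.mem_antidiagonal]
      constructor
      · rw [← hmem]; simp
      · rw [← hmem, finsupp_tail_add]
    · rintro ⟨⟨i₁, i₂⟩, ⟨e₁, e₂⟩⟩ _
      simp [Finsupp.cons_zero, Finsupp.tail_cons]
    · rintro ⟨p₁, p₂⟩ _
      simp [Finsupp.cons_tail]
    · rintro ⟨⟨i₁, i₂⟩, ⟨e₁, e₂⟩⟩ _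
      show _ = MvPowerSeries.coeff (R := A) (Finsupp.tail (Finsupp.cons i₁ e₁))
          (PowerSeries.coeff (Finsupp.cons i₁ e₁ 0) F) *
        MvPowerSeries.coeff (R := A) (Finsupp.tail (Finsupp.cons i₂ e₂))
          (PowerSeries.coeff (Finsupp.cons i₂ e₂ 0) G)
      simp [Finsupp.cons_zero, Finsupp.tail_cons]

lemma psi_apply (k : ℕ) (F : PowerSeries (MvPowerSeries (Fin k) A)) (e : Fin (k + 1) →₀ ℕ) :
    psi k F e = MvPowerSeries.coeff (R := A) (Finsupp.tail e)
      (PowerSeries.coeff (R := MvPowerSeries (Fin k) A) (e 0) F) := rfl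

lemma psi_surjective (k : ℕ) : Function.Surjective (psi (A := A) k) := by
  intro G
  refine ⟨PowerSeries.mk fun i => (fun u => MvPowerSeries.coeff (R := A) (Finsupp.cons i u) G : MvPowerSeries (Fin k) A), ?_⟩
  funext e
  rw [psi_apply]
  erw [PowerSeries.coeff_mk]
  show MvPowerSeries.coeff (R := A) (Finsupp.cons (e 0) (Finsupp.tail e)) G = _
  rw [Finsupp.cons_tail]; rfl

lemma mv_isNoetherianRing [IsNoetherianRing A] (k : ℕ) :
    IsNoetherianRing (MvPowerSeries (Fin k) A) := by
  induction k with
  | zero =>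
    refine isNoetherianRing_of_surjective A _ (MvPowerSeries.C (σ := Fin 0) (R := A)) ?_
    intro g
    refine ⟨MvPowerSeries.coeff (R := A) 0 g, ?_⟩
    ext e
    have he : e = 0 := Finsupp.ext fun i => i.elim0
    subst he
    simp [MvPowerSeries.coeff_C]
  | succ k ih =>
    haveI := ih
    haveI : IsNoetherianRing (PowerSeries (MvPowerSeries (Fin k) A)) :=
      powerSeries_isNoetherianRing
    exact isNoetherianRing_of_surjective _ _ (psi k) (psi_surjective k)



local notation "T" => PowerSeries (MvPowerSeries (Fin n) A)

/-- Degree of a monomial exponent. -/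
def deg (e : Fin n →₀ ℕ) : ℕ := e.sum fun _ v => v

lemma deg_add (e₁ e₂ : Fin n →₀ ℕ) : deg (e₁ + e₂) = deg e₁ + deg e₂ :=
  Finsupp.sum_add_index' (fun _ => rfl) (fun _ _ _ => rfl)

/-- `t`-homogeneous projection of degree `d`. -/
def projFun (d : ℤ) (F : T) : T :=
  PowerSeries.mk fun i =>
    (fun e => if ((deg e : ℕ) : ℤ) = (i : ℤ) + d then
        MvPowerSeries.coeff (R := A) e (PowerSeries.coeff (R := MvPowerSeries (Fin n) A) i F) else 0 :
      MvPowerSeries (Fin n) A)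

lemma coeff_projFun (d : ℤ) (F : T) (i : ℕ) (e : Fin n →₀ ℕ) :
    MvPowerSeries.coeff (R := A) e (PowerSeries.coeff (R := MvPowerSeries (Fin n) A) i (projFun d F))
      = if ((deg e : ℕ) : ℤ) = (i : ℤ) + d then
          MvPowerSeries.coeff (R := A) e (PowerSeries.coeff (R := MvPowerSeries (Fin n) A) i F) else 0 := by
  rw [projFun]; erw [PowerSeries.coeff_mk]; rfl

lemma projFun_add (d : ℤ) (F G : T) :
    projFun d (F + G) = projFun d F + projFun d G := by
  ext i e
  conv_rhs => rw [map_add, map_add, coeff_projFun, coeff_projFun]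
  rw [coeff_projFun]
  split_ifs <;> simp

lemma projFun_zero (d : ℤ) : projFun d (0 : T) = 0 := by
  ext i e
  rw [coeff_projFun]
  split_ifs <;> simp

/-- The projection as an additive monoid hom. -/
def proj (d : ℤ) : T →+ T where
  toFun := projFun d
  map_zero' := projFun_zero d
  map_add' := projFun_add d

lemma coeff_proj (d : ℤ) (F : T) (i : ℕ) (e : Fin n →₀ ℕ) :
    MvPowerSeries.coeff (R := A) e (PowerSeries.coeff (R := MvPowerSeries (Fin n) A) i (proj d F))
      = if ((deg e : ℕ) : ℤ) = (i : ℤ) + d then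
          MvPowerSeries.coeff (R := A) e (PowerSeries.coeff (R := MvPowerSeries (Fin n) A) i F) else 0 :=
  coeff_projFun d F i e

/-- The key multiplication rule for projections against a `t`-homogeneous series. -/
lemma proj_mul_homog (d d' : ℤ) (g : T)
    (hg : ∀ (i : ℕ) (e : Fin n →₀ ℕ), ((deg e : ℕ) : ℤ) ≠ (i : ℤ) + d' →
      MvPowerSeries.coeff (R := A) e (PowerSeries.coeff (R := MvPowerSeries (Fin n) A) i g) = 0)
    (H : T) :
    proj d (H * g) = proj (d - d') H * g := by
  classical
  ext i e
  rw [coeff_proj]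
  rw [PowerSeries.coeff_mul, map_sum, PowerSeries.coeff_mul, map_sum]
  have hexp : ∀ (K : T) (p : ℕ × ℕ),
      MvPowerSeries.coeff (R := A) e (PowerSeries.coeff (R := MvPowerSeries (Fin n) A) p.1 K *
        PowerSeries.coeff (R := MvPowerSeries (Fin n) A) p.2 g)
      = ∑ q ∈ Finset.HasAntidiagonal.antidiagonal e,
          MvPowerSeries.coeff (R := A) q.1 (PowerSeries.coeff (R := MvPowerSeries (Fin n) A) p.1 K) *
          MvPowerSeries.coeff (R := A) q.2 (PowerSeries.coeff (R := MvPowerSeries (Fin n) A) p.2 g) :=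
    fun K p => MvPowerSeries.coeff_mul _ _ _
  rw [Finset.sum_congr rfl fun p _ => hexp H p, Finset.sum_congr rfl fun p _ => hexp (proj (d - d') H) p]
  by_cases hcond : ((deg e : ℕ) : ℤ) = (i : ℤ) + d
  · rw [if_pos hcond]
    refine Finset.sum_congr rfl fun p hp => Finset.sum_congr rfl fun q hq => ?_
    by_cases hzero : MvPowerSeries.coeff (R := A) q.2 (PowerSeries.coeff (R := MvPowerSeries (Fin n) A) p.2 g) = 0
    · rw [hzero, mul_zero, mul_zero]
    · have hdeg2 : ((deg q.2 : ℕ) : ℤ) = (p.2 : ℤ) + d' := by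
        by_contra hne
        exact hzero (hg p.2 q.2 hne)
      have hpsum : p.1 + p.2 = i := Finset.HasAntidiagonal.mem_antidiagonal.mp hp
      have hqsum : q.1 + q.2 = e := Finset.HasAntidiagonal.mem_antidiagonal.mp hq
      have hdegsum : deg q.1 + deg q.2 = deg e := by rw [← deg_add, hqsum]
      have hdeg1 : ((deg q.1 : ℕ) : ℤ) = (p.1 : ℤ) + (d - d') := by
        have h1 : ((deg q.1 : ℕ) : ℤ) + ((deg q.2 : ℕ) : ℤ) = ((deg e : ℕ) : ℤ) := by
          exact_mod_cast congrArg (Nat.cast : ℕ → ℤ) hdegsum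
        have h2 : ((p.1 : ℕ) : ℤ) + ((p.2 : ℕ) : ℤ) = ((i : ℕ) : ℤ) := by
          exact_mod_cast congrArg (Nat.cast : ℕ → ℤ) hpsum
        omega
      rw [coeff_proj, if_pos hdeg1]
  · rw [if_neg hcond]
    symm
    refine Finset.sum_eq_zero fun p hp => Finset.sum_eq_zero fun q hq => ?_
    by_cases hzero : MvPowerSeries.coeff (R := A) q.2 (PowerSeries.coeff (R := MvPowerSeries (Fin n) A) p.2 g) = 0
    · rw [hzero, mul_zero]
    · have hdeg2 : ((deg q.2 : ℕ) : ℤ) = (p.2 : ℤ) + d' := by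
        by_contra hne
        exact hzero (hg p.2 q.2 hne)
      have hpsum : p.1 + p.2 = i := Finset.HasAntidiagonal.mem_antidiagonal.mp hp
      have hqsum : q.1 + q.2 = e := Finset.HasAntidiagonal.mem_antidiagonal.mp hq
      have hdegsum : deg q.1 + deg q.2 = deg e := by rw [← deg_add, hqsum]
      rw [coeff_proj, if_neg, zero_mul]
      intro hdeg1
      apply hcond
      have h1 : ((deg q.1 : ℕ) : ℤ) + ((deg q.2 : ℕ) : ℤ) = ((deg e : ℕ) : ℤ) := by
        exact_mod_cast congrArg (Nat.cast : ℕ → ℤ) hdegsum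
      have h2 : ((p.1 : ℕ) : ℤ) + ((p.2 : ℕ) : ℤ) = ((i : ℕ) : ℤ) := by
        exact_mod_cast congrArg (Nat.cast : ℕ → ℤ) hpsum
      omega





lemma deg_single (j : Fin n) : deg (Finsupp.single j 1) = 1 := by
  simp [deg]

lemma deg_zero : deg (0 : Fin n →₀ ℕ) = 0 := by simp [deg]

/-- The ideal `(x₁, …, xₙ)` in `A[[x₁,…,xₙ]]`. -/
def Ix : Ideal (MvPowerSeries (Fin n) A) :=
  Ideal.span (Set.range (MvPowerSeries.X (σ := Fin n) (R := A)))

lemma mvDiv : ∀ (m : ℕ) (g : MvPowerSeries (Fin n) A),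
    (∀ e, deg e < m → MvPowerSeries.coeff (R := A) e g = 0) → g ∈ (Ix (A := A) (n := n)) ^ m := by
  intro m
  induction m with
  | zero => intro g _; simp
  | succ m ih =>
    intro g hg
    classical
    -- the selection predicate: `j` is the least element of the support of `e`
    set sel : (Fin n →₀ ℕ) → Fin n → Prop :=
      fun e j => j ∈ e.support ∧ ∀ i ∈ e.support, j ≤ i with hsel
    have sel_unique : ∀ e j j', sel e j → sel e j' → j = j' := by
      rintro e j j' ⟨hj1, hj2⟩ ⟨hj'1, hj'2⟩
      exact le_antisymm (hj2 j' hj'1) (hj'2 j hj1)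
    have sel_exists : ∀ (e : Fin n →₀ ℕ) (hne : e.support.Nonempty), sel e (e.support.min' hne) :=
      fun e hne => ⟨Finset.min'_mem _ _, fun i hi => Finset.min'_le _ _ hi⟩
    set gj : Fin n → MvPowerSeries (Fin n) A := fun j =>
      (fun e' => if sel (e' + Finsupp.single j 1) j then
          MvPowerSeries.coeff (R := A) (e' + Finsupp.single j 1) g else 0) with hgj
    have hgj_coeff : ∀ j e', MvPowerSeries.coeff (R := A) e' (gj j)
        = if sel (e' + Finsupp.single j 1) j then
            MvPowerSeries.coeff (R := A) (e' + Finsupp.single j 1) g else 0 := by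
      intro j e'; rw [hgj]; rfl
    have hgj_low : ∀ j, ∀ e', deg e' < m → MvPowerSeries.coeff (R := A) e' (gj j) = 0 := by
      intro j e' he'
      rw [hgj_coeff]
      have : MvPowerSeries.coeff (R := A) (e' + Finsupp.single j 1) g = 0 := by
        apply hg
        rw [deg_add, deg_single]
        omega
      rw [this]
      split_ifs <;> rfl
    have hdecomp : g = ∑ j : Fin n, MvPowerSeries.X j * gj j := by
      apply MvPowerSeries.ext
      intro e
      rw [map_sum]
      have hterm : ∀ j : Fin n, MvPowerSeries.coeff (R := A) e (MvPowerSeries.X j * gj j)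
          = if Finsupp.single j 1 ≤ e then
              MvPowerSeries.coeff (R := A) (e - Finsupp.single j 1) (gj j) else 0 := by
        intro j
        rw [MvPowerSeries.X_def, MvPowerSeries.coeff_monomial_mul]
        split_ifs <;> simp
      rw [Finset.sum_congr rfl fun j _ => hterm j]
      by_cases he : e = 0
      · subst he
        have : ∀ j ∈ Finset.univ (α := Fin n),
            (if Finsupp.single j 1 ≤ (0 : Fin n →₀ ℕ) then
              MvPowerSeries.coeff (R := A) (0 - Finsupp.single j 1) (gj j) else 0) = 0 := by
          intro j _
          rw [if_neg]
          rw [Finsupp.single_le_iff]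
          simp
        rw [Finset.sum_congr rfl this, Finset.sum_const_zero, hg 0 (by rw [deg_zero]; omega)]
      · have hne : e.support.Nonempty := by
          rwa [Finset.nonempty_iff_ne_empty, Ne, Finsupp.support_eq_empty]
        set j₀ := e.support.min' hne with hj₀
        have hsel₀ : sel e j₀ := sel_exists e hne
        have hj₀mem : e j₀ ≠ 0 := Finsupp.mem_support_iff.mp hsel₀.1
        have hle₀ : Finsupp.single j₀ 1 ≤ e := Finsupp.single_le_iff.mpr (by omega)
        rw [Finset.sum_eq_single j₀]
        · rw [if_pos hle₀, hgj_coeff, tsub_add_cancel_of_le hle₀, if_pos hsel₀]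
        · intro j _ hj
          by_cases hjs : Finsupp.single j 1 ≤ e
          · rw [if_pos hjs, hgj_coeff, tsub_add_cancel_of_le hjs, if_neg]
            intro hselj
            exact hj (sel_unique e j j₀ hselj hsel₀)
          · rw [if_neg hjs]
        · intro habs
          exact absurd (Finset.mem_univ j₀) habs
    rw [hdecomp]
    refine Ideal.sum_mem _ fun j _ => ?_
    rw [pow_succ, mul_comm]
    exact Ideal.mul_mem_mul (Ideal.subset_span ⟨j, rfl⟩) (ih (gj j) (hgj_low j))

/-- The ideal `(x₁,…,xₙ,t)` in `T`. -/
def IT : Ideal T :=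
  Ideal.span ({PowerSeries.X} ∪
    Set.range fun j => PowerSeries.C (R := MvPowerSeries (Fin n) A) (MvPowerSeries.X j))

lemma tDiv : ∀ (m : ℕ) (G : T),
    (∀ (i : ℕ) (e : Fin n →₀ ℕ), i + deg e < m →
      MvPowerSeries.coeff (R := A) e (PowerSeries.coeff (R := MvPowerSeries (Fin n) A) i G) = 0) →
    G ∈ (IT (A := A) (n := n)) ^ m := by
  intro m
  induction m with
  | zero => intro G _; simp
  | succ m ih =>
    intro G hG
    rw [PowerSeries.eq_X_mul_shift_add_const G]
    refine Ideal.add_mem _ ?_ ?_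
    · rw [pow_succ, mul_comm]
      refine Ideal.mul_mem_mul (Ideal.subset_span (Or.inl rfl)) (ih _ ?_)
      intro i e hie
      rw [PowerSeries.coeff_mk]
      exact hG (i + 1) e (by omega)
    · have h0 : PowerSeries.constantCoeff (R := MvPowerSeries (Fin n) A) G ∈
          (Ix (A := A) (n := n)) ^ (m + 1) := by
        apply mvDiv
        intro e he
        have := hG 0 e (by omega)
        rwa [PowerSeries.coeff_zero_eq_constantCoeff] at this
      have h1 : PowerSeries.C (R := MvPowerSeries (Fin n) A)
          (PowerSeries.constantCoeff (R := MvPowerSeries (Fin n) A) G) ∈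
          (Ideal.map (PowerSeries.C (R := MvPowerSeries (Fin n) A)) ((Ix (A := A) (n := n)) ^ (m+1))) :=
        Ideal.mem_map_of_mem _ h0
      rw [Ideal.map_pow] at h1
      refine Set.mem_of_mem_of_subset h1 (Ideal.pow_right_mono ?_ (m + 1))
      unfold Ix IT
      rw [Ideal.map_span, Ideal.span_le]
      rintro x ⟨y, ⟨j, rfl⟩, rfl⟩
      exact Ideal.subset_span (Or.inr ⟨j, rfl⟩)

lemma IT_ne_top [Nontrivial A] : (IT (A := A) (n := n)) ≠ ⊤ := by
  set ε : T →+* A := (MvPowerSeries.constantCoeff (σ := Fin n) (R := A)).comp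
    (PowerSeries.constantCoeff (R := MvPowerSeries (Fin n) A)) with hε
  have hker : IT (A := A) (n := n) ≤ RingHom.ker ε := by
    rw [IT, Ideal.span_le]
    rintro x (rfl | ⟨j, rfl⟩)
    · simp [hε, RingHom.mem_ker]
    · simp [hε, RingHom.mem_ker]
  intro htop
  have h1 : (1 : T) ∈ RingHom.ker ε := hker (htop ▸ Submodule.mem_top)
  rw [RingHom.mem_ker, map_one] at h1
  exact one_ne_zero h1

end Stmt4Aux

set_option maxHeartbeats 1000000 in
set_option synthInstance.maxHeartbeats 400000 in
/-- Let `J ⊆ T = A[[x₁,…,xₙ]][[t]]` be an ideal generated by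
`t`-homogeneous elements, `A` a complete regular local ring. If `F ∈ T` has
`t`-homogeneous decomposition `F = ∑_{d ∈ ℤ} c d`, then `F ∈ J` iff `c d ∈ J` for
all `d ∈ ℤ`. -/

theorem stmt4 [IsLocalRing A] (hA : IsCompleteRegularLocal A)
    (J : Ideal (PowerSeries (MvPowerSeries (Fin n) A)))
    (hJ : ∃ gens : Set (PowerSeries (MvPowerSeries (Fin n) A)),
      (∀ g ∈ gens, ∃ d : ℤ, tHomogeneous d g) ∧ J = Ideal.span gens)
    (F : PowerSeries (MvPowerSeries (Fin n) A))
    (c : ℤ → PowerSeries (MvPowerSeries (Fin n) A))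
    (hc : ∀ d : ℤ, tHomogeneous d (c d))
    (hdecomp : ∀ (i : ℕ) (e : Fin n →₀ ℕ),
      MvPowerSeries.coeff (R := A) e (PowerSeries.coeff (R := MvPowerSeries (Fin n) A) i F) =
        MvPowerSeries.coeff (R := A) e (PowerSeries.coeff (R := MvPowerSeries (Fin n) A) i
          (c (((e.sum fun _ v => v : ℕ) : ℤ) - (i : ℤ))))) :
    F ∈ J ↔ ∀ d : ℤ, c d ∈ J := by
  classical
  obtain ⟨gens, hgens, hJspan⟩ := hJ
  have hceq : ∀ d : ℤ, c d = Stmt4Aux.proj d F := by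
    intro d
    ext i e
    rw [Stmt4Aux.coeff_proj]
    by_cases hcond : ((Stmt4Aux.deg e : ℕ) : ℤ) = (i : ℤ) + d
    · rw [if_pos hcond, hdecomp i e]
      have hcond' : ((e.sum fun _ v => v : ℕ) : ℤ) = (i : ℤ) + d := hcond
      have heq : ((e.sum fun _ v => v : ℕ) : ℤ) - (i : ℤ) = d := by omega
      rw [heq]
    · rw [if_neg hcond]
      exact hc d i e hcond
  constructor
  · intro hF d
    rw [hceq d, hJspan]
    rw [hJspan] at hF
    obtain ⟨co, hsupp, hsum⟩ := Submodule.mem_span_set.mp hF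
    rw [← hsum, map_finsuppSum, Finsupp.sum]
    refine Ideal.sum_mem _ fun g hg => ?_
    obtain ⟨d', hd'⟩ := hgens g (hsupp hg)
    have hgJ : g ∈ Ideal.span gens := Ideal.subset_span (hsupp hg)
    rw [smul_eq_mul, Stmt4Aux.proj_mul_homog d d' g (fun i e h => hd' i e h) (co g)]
    exact Ideal.mul_mem_left _ _ hgJ
  · intro hcd
    haveI hNoethA : IsNoetherianRing A := hA.1
    haveI hNMv : IsNoetherianRing (MvPowerSeries (Fin n) A) := Stmt4Aux.mv_isNoetherianRing n
    haveI hNT : IsNoetherianRing (PowerSeries (MvPowerSeries (Fin n) A)) :=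
      Stmt4Aux.powerSeries_isNoetherianRing (R := MvPowerSeries (Fin n) A)
    haveI hMF : Module.Finite (PowerSeries (MvPowerSeries (Fin n) A))
        (PowerSeries (MvPowerSeries (Fin n) A) ⧸ J) :=
      Module.Finite.of_surjective (Submodule.mkQ J) (Submodule.Quotient.mk_surjective J)
    set S : ℕ → PowerSeries (MvPowerSeries (Fin n) A) :=
      fun m => ∑ d ∈ Finset.Icc (-(m : ℤ)) (m : ℤ), c d with hSdef
    have hSJ : ∀ m, S m ∈ J := fun m => Ideal.sum_mem _ fun d _ => hcd d
    have hdiff : ∀ m, F - S m ∈ (Stmt4Aux.IT (A := A) (n := n)) ^ m := by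
      intro m
      apply Stmt4Aux.tDiv
      intro i e hie
      have hde : Stmt4Aux.deg e = e.sum fun _ v => v := rfl
      rw [map_sub, map_sub]
      have hcS : MvPowerSeries.coeff (R := A) e (PowerSeries.coeff (R := MvPowerSeries (Fin n) A) i (S m))
          = MvPowerSeries.coeff (R := A) e (PowerSeries.coeff (R := MvPowerSeries (Fin n) A) i
              (c (((e.sum fun _ v => v : ℕ) : ℤ) - (i : ℤ)))) := by
        rw [hSdef]
        dsimp only
        rw [map_sum, map_sum]
        refine Finset.sum_eq_single_of_mem _ ?_ ?_
        · rw [Finset.mem_Icc]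
          constructor <;> omega
        · intro d _ hne
          exact hc d i e (by omega)
      rw [hcS, ← hdecomp i e, sub_self]
    have hbot := Ideal.iInf_pow_smul_eq_bot_of_isLocalRing
      (R := PowerSeries (MvPowerSeries (Fin n) A))
      (M := PowerSeries (MvPowerSeries (Fin n) A) ⧸ J)
      (I := Stmt4Aux.IT (A := A) (n := n)) Stmt4Aux.IT_ne_top
    have hmem : (Submodule.Quotient.mk F : PowerSeries (MvPowerSeries (Fin n) A) ⧸ J)
        ∈ (⨅ m : ℕ, ((Stmt4Aux.IT (A := A) (n := n)) ^ m • ⊤ :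
            Submodule (PowerSeries (MvPowerSeries (Fin n) A))
              (PowerSeries (MvPowerSeries (Fin n) A) ⧸ J))) := by
      rw [Submodule.mem_iInf]
      intro m
      have hqm : (Submodule.Quotient.mk F : PowerSeries (MvPowerSeries (Fin n) A) ⧸ J)
          = (F - S m) • (Submodule.Quotient.mk 1 :
              PowerSeries (MvPowerSeries (Fin n) A) ⧸ J) := by
        rw [← Submodule.Quotient.mk_smul J, smul_eq_mul, mul_one, Submodule.Quotient.eq]
        simpa using hSJ m
      rw [hqm]
      exact Submodule.smul_mem_smul (hdiff m) Submodule.mem_top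
    rw [hbot] at hmem
    have hzero : (Submodule.Quotient.mk F :
        PowerSeries (MvPowerSeries (Fin n) A) ⧸ J) = 0 := hmem
    rwa [Submodule.Quotient.mk_eq_zero] at hzero

end
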